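/- (Kellerer's extension lemma.) Let ε ∈ (0, 1], and let F and S be disjoint sets of items such that every item of S has weight at most ε and the total weight of F plus the total weight of S is at most m(1 − ε). If p is a packing of F into m unit-capacity bins, then there exists a packing of F ∪ S into the m bins that agrees with p on all items of F. In other words, any packing of F of total weight at most m(1 − ε) − w(S) can be completed greedily with all items of S. -/

import Mathlib

theorem kellerer_extension
    (n m : ℕ) (hm : 1 ≤ m) (w : Fin n → ℝ)
    (hw : ∀ i, 0 < w i ∧ w i ≤ 1)
    (ε : ℝ) (hε0 : 0 < ε) (hε1 : ε ≤ 1)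
    (F S : Finset (Fin n)) (hdisj : Disjoint F S)
    (hS : ∀ i ∈ S, w i ≤ ε)
    (hwt : (∑ i ∈ F, w i) + (∑ i ∈ S, w i) ≤ m * (1 - ε))
    (p : Fin n → Fin m)
    (hp : ∀ j : Fin m, ∑ i ∈ F.filter (fun i => p i = j), w i ≤ 1) :
    ∃ q : Fin n → Fin m, (∀ i ∈ F, q i = p i) ∧
      ∀ j : Fin m, ∑ i ∈ (F ∪ S).filter (fun i => q i = j), w i ≤ 1 := by
  induction S using Finset.induction_on generalizing F p with
  | empty =>
    exact ⟨p, fun i _ => rfl, by simpa using hp⟩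
  | @insert s S' hs ih =>
    have hsF : s ∉ F := fun h =>
      Finset.disjoint_left.mp hdisj h (Finset.mem_insert_self s S')
    have hwS' : 0 ≤ ∑ i ∈ S', w i := Finset.sum_nonneg fun i _ => (hw i).1.le
    have hws : 0 < w s := (hw s).1
    have hins : ∑ i ∈ insert s S', w i = w s + ∑ i ∈ S', w i := Finset.sum_insert hs
    have hsum : ∑ i ∈ F, w i < (m : ℝ) * (1 - ε) := by
      rw [hins] at hwt; linarith
    have hne : Nonempty (Fin m) := ⟨⟨0, hm⟩⟩
    have hloads : ∑ j : Fin m, ∑ i ∈ F.filter (fun i => p i = j), w i = ∑ i ∈ F, w i :=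
      Finset.sum_fiberwise F (fun i => p i) w
    obtain ⟨j, hj⟩ : ∃ j : Fin m, ∑ i ∈ F.filter (fun i => p i = j), w i ≤ 1 - ε := by
      by_contra h
      push_neg at h
      have hlt : (m : ℝ) * (1 - ε) < ∑ j : Fin m, ∑ i ∈ F.filter (fun i => p i = j), w i := by
        calc (m : ℝ) * (1 - ε) = ∑ _j : Fin m, (1 - ε) := by
              simp [mul_comm]; ring
          _ < _ := Finset.sum_lt_sum_of_nonempty Finset.univ_nonempty fun j _ => h j
      rw [hloads] at hlt
      linarith
    set p' : Fin n → Fin m := Function.update p s j with hp'def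
    have hfil : ∀ j' : Fin m,
        F.filter (fun i => p' i = j') = F.filter (fun i => p i = j') := by
      intro j'
      apply Finset.filter_congr
      intro i hi
      simp [hp'def, Function.update_of_ne (ne_of_mem_of_not_mem hi hsF)]
    have hdisj' : Disjoint (insert s F) S' := by
      rw [Finset.disjoint_left]
      intro a ha haS'
      rcases Finset.mem_insert.mp ha with rfl | haF
      · exact hs haS'
      · exact Finset.disjoint_left.mp hdisj haF (Finset.mem_insert_of_mem haS')
    have hS' : ∀ i ∈ S', w i ≤ ε := fun i hi => hS i (Finset.mem_insert_of_mem hi)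
    have hwt' : (∑ i ∈ insert s F, w i) + (∑ i ∈ S', w i) ≤ m * (1 - ε) := by
      rw [Finset.sum_insert hsF]
      rw [hins] at hwt
      linarith
    have hp' : ∀ j' : Fin m, ∑ i ∈ (insert s F).filter (fun i => p' i = j'), w i ≤ 1 := by
      intro j'
      rw [Finset.filter_insert]
      have hps : p' s = j := Function.update_self s j p
      by_cases hjj : j' = j
      · subst hjj
        rw [if_pos hps, Finset.sum_insert (fun h => hsF (Finset.mem_of_mem_filter s h)),
          hfil]
        have := hS s (Finset.mem_insert_self s S')
        linarith
      · rw [if_neg (by rw [hps]; exact fun h => hjj h.symm), hfil]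
        exact hp j'
    obtain ⟨q, hq1, hq2⟩ := ih (insert s F) hdisj' hS' hwt' p' hp'
    refine ⟨q, fun i hi => ?_, fun j' => ?_⟩
    · rw [hq1 i (Finset.mem_insert_of_mem hi), hp'def,
        Function.update_of_ne (ne_of_mem_of_not_mem hi hsF)]
    · have : F ∪ insert s S' = insert s F ∪ S' := by
        rw [Finset.union_insert, Finset.insert_union]
      rw [this]
      exact hq2 j'
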